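/- Let J₁, J₂ ⊆ I be ideals in a commutative Noetherian ring R such that both J₁ ⊆ I and J₂ ⊆ I are Aluffi torsion-free. Then J₁ + J₂ ⊆ I is Aluffi torsion-free if and only if the image of J₁ in R/J₂ together with the image of I in R/J₂ form an Aluffi torsion-free pair. -/

import Mathlib

/-- Sum of two Aluffi torsion-free ideals is Aluffi torsion-free iff one of them
modulo the other is Aluffi torsion-free. -/
theorem sum_aluffi_torsion_free_iff {R : Type*} [CommRing R] [IsNoetherianRing R]
    (J₁ J₂ I : Ideal R) (h₁I : J₁ ≤ I) (h₂I : J₂ ≤ I)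
    (h₁ : ∀ n : ℕ, 1 ≤ n → J₁ ⊓ I ^ n = J₁ * I ^ (n - 1))
    (h₂ : ∀ n : ℕ, 1 ≤ n → J₂ ⊓ I ^ n = J₂ * I ^ (n - 1)) :
    (∀ n : ℕ, 1 ≤ n → (J₁ + J₂) ⊓ I ^ n = (J₁ + J₂) * I ^ (n - 1)) ↔
      (∀ n : ℕ, 1 ≤ n →
        (J₁.map (Ideal.Quotient.mk J₂)) ⊓ (I.map (Ideal.Quotient.mk J₂)) ^ n =
          (J₁.map (Ideal.Quotient.mk J₂)) * (I.map (Ideal.Quotient.mk J₂)) ^ (n - 1)) := by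
  have hsur : Function.Surjective (Ideal.Quotient.mk J₂) := Ideal.Quotient.mk_surjective
  have hcm : ∀ K : Ideal R,
      Ideal.comap (Ideal.Quotient.mk J₂) (Ideal.map (Ideal.Quotient.mk J₂) K) = K ⊔ J₂ := by
    intro K
    rw [Ideal.comap_map_of_surjective _ hsur, ← RingHom.ker_eq_comap_bot, Ideal.mk_ker]
  have hinj : Function.Injective
      (Ideal.comap (Ideal.Quotient.mk J₂) : Ideal (R ⧸ J₂) → Ideal R) :=
    Ideal.comap_injective_of_surjective _ hsur
  have hquot : ∀ n : ℕ,
      ((J₁.map (Ideal.Quotient.mk J₂)) ⊓ (I.map (Ideal.Quotient.mk J₂)) ^ n =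
        (J₁.map (Ideal.Quotient.mk J₂)) * (I.map (Ideal.Quotient.mk J₂)) ^ (n - 1)) ↔
      (J₁ ⊔ J₂) ⊓ (I ^ n ⊔ J₂) = (J₁ * I ^ (n - 1)) ⊔ J₂ := by
    intro n
    constructor
    · intro h
      have h' := congrArg (Ideal.comap (Ideal.Quotient.mk J₂)) h
      rwa [Ideal.comap_inf, ← Ideal.map_pow, ← Ideal.map_pow, ← Ideal.map_mul,
        hcm, hcm, hcm] at h'
    · intro h
      apply hinj
      rw [Ideal.comap_inf, ← Ideal.map_pow, ← Ideal.map_pow, ← Ideal.map_mul,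
        hcm, hcm, hcm, h]
  constructor
  · intro h n hn
    rw [hquot n]
    have key := h n hn
    rw [Submodule.add_eq_sup] at key
    rw [← inf_sup_assoc_of_le _ (le_sup_right : J₂ ≤ J₁ ⊔ J₂), key, Ideal.sup_mul, sup_assoc]
    congr 1
    exact sup_eq_right.mpr Ideal.mul_le_left
  · intro h n hn
    have key := (hquot n).1 (h n hn)
    rw [← inf_sup_assoc_of_le _ (le_sup_right : J₂ ≤ J₁ ⊔ J₂)] at key
    have hn' : n - 1 + 1 = n := Nat.succ_pred_eq_of_pos hn
    have hpow : I * I ^ (n - 1) = I ^ n := by rw [← pow_succ', hn']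
    rw [Submodule.add_eq_sup]
    apply le_antisymm
    · intro x hx
      obtain ⟨hx1, hx2⟩ := Ideal.mem_inf.mp hx
      have hx3 : x ∈ J₁ * I ^ (n - 1) ⊔ J₂ := by
        rw [← key]
        exact Submodule.mem_sup_left hx
      obtain ⟨a, ha, b, hb, hab⟩ := Submodule.mem_sup.mp hx3
      have haI : a ∈ I ^ n := by
        have hle : J₁ * I ^ (n - 1) ≤ I ^ n := by
          calc J₁ * I ^ (n - 1) ≤ I * I ^ (n - 1) := Ideal.mul_mono_left h₁I
            _ = I ^ n := hpow
        exact hle ha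
      have hbI : b ∈ I ^ n := by
        have hb' : b = x - a := by
          rw [← hab]; ring
        rw [hb']
        exact Submodule.sub_mem _ hx2 haI
      have hb2 : b ∈ J₂ * I ^ (n - 1) := by
        rw [← h₂ n hn]
        exact Ideal.mem_inf.mpr ⟨hb, hbI⟩
      rw [Ideal.sup_mul]
      exact hab ▸ Submodule.add_mem_sup ha hb2
    · apply le_inf Ideal.mul_le_left
      calc (J₁ ⊔ J₂) * I ^ (n - 1) ≤ I * I ^ (n - 1) :=
            Ideal.mul_mono_left (sup_le h₁I h₂I)
        _ = I ^ n := hpow
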